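/- Let c_1 < c_2 be real numbers, c = c_2 − c_1, and (α, β) ∈ ℂ². Set t = |α|², Q = √(|β|²(1 + t)² + c²), z = (1/2)(c_1 + c_2) − ((1 − t)/(2(1 + t))) Q, ρ = |α| |β|, and r_j = √(ρ² + (z − c_j)²) for j = 1, 2. Then: r_1 = Q/2 − c(1 − t)/(2(1 + t)); r_2 = Q/2 + c(1 − t)/(2(1 + t)); r_1 − (z − c_1) = (Q − c)/(1 + t); r_2 − (z − c_2) = (Q + c)/(1 + t); and μ_2 := (1/2)[(r_1 + z − c_1) + (r_2 + z − c_2)] = t Q/(1 + t). -/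

import Mathlib

set_option maxHeartbeats 1600000 in
/-- Geometry of the `n = 2` Gibbons-Hawking (Eguchi-Hanson) space in the local
complex coordinates `(α, β)`: with `c = c₂ − c₁`, `t = |α|²`,
`Q = √(|β|²(1+t)² + c²)`, `z = (1/2)(c₁+c₂) − ((1−t)/(2(1+t)))Q`, `ρ = |α||β|`,
`r_j = √(ρ² + (z − c_j)²)`, one has explicit formulas for `r₁`, `r₂`,
`r_j − (z − c_j)` and the moment-map component `μ₂`. -/
theorem eguchi_hanson_alpha_beta_formulas
    (c₁ c₂ : ℝ) (hc₁₂ : c₁ < c₂) (c : ℝ) (hc : c = c₂ - c₁)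
    (α β : ℂ)
    (t Q z ρ r₁ r₂ : ℝ)
    (ht : t = ‖α‖ ^ 2)
    (hQ : Q = Real.sqrt (‖β‖ ^ 2 * (1 + t) ^ 2 + c ^ 2))
    (hz : z = (1 / 2) * (c₁ + c₂) - ((1 - t) / (2 * (1 + t))) * Q)
    (hρ : ρ = ‖α‖ * ‖β‖)
    (hr₁ : r₁ = Real.sqrt (ρ ^ 2 + (z - c₁) ^ 2))
    (hr₂ : r₂ = Real.sqrt (ρ ^ 2 + (z - c₂) ^ 2)) :
    r₁ = Q / 2 - c * (1 - t) / (2 * (1 + t)) ∧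
    r₂ = Q / 2 + c * (1 - t) / (2 * (1 + t)) ∧
    r₁ - (z - c₁) = (Q - c) / (1 + t) ∧
    r₂ - (z - c₂) = (Q + c) / (1 + t) ∧
    (1 / 2) * ((r₁ + z - c₁) + (r₂ + z - c₂)) = t * Q / (1 + t) := by
  have ht0 : 0 ≤ t := ht ▸ sq_nonneg _
  have h1t : (0:ℝ) < 1 + t := by linarith
  have hc0 : 0 < c := by rw [hc]; linarith
  have hb0 : 0 ≤ ‖β‖ ^ 2 := sq_nonneg _
  have harg : 0 ≤ ‖β‖ ^ 2 * (1 + t) ^ 2 + c ^ 2 := by positivity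
  have hQ0 : 0 ≤ Q := hQ ▸ Real.sqrt_nonneg _
  have hQsq : Q ^ 2 = ‖β‖ ^ 2 * (1 + t) ^ 2 + c ^ 2 := by
    rw [hQ, Real.sq_sqrt harg]
  have hQc : c ≤ Q := by
    nlinarith [sq_nonneg (Q - c), sq_nonneg (Q + c)]
  have hρsq : ρ ^ 2 = t * ‖β‖ ^ 2 := by
    rw [hρ, ht]; ring
  have hbQ : ‖β‖ ^ 2 = (Q ^ 2 - c ^ 2) / (1 + t) ^ 2 := by
    field_simp; linarith [hQsq]
  -- formula for r₁
  have hA1 : 0 ≤ Q / 2 - c * (1 - t) / (2 * (1 + t)) := by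
    rw [div_sub_div _ _ (two_ne_zero) (by positivity)]
    apply div_nonneg _ (by positivity)
    nlinarith
  have e1 : ρ ^ 2 + (z - c₁) ^ 2 = (Q / 2 - c * (1 - t) / (2 * (1 + t))) ^ 2 := by
    rw [hρsq, hbQ, hz, hc]
    field_simp
    ring
  have hR1 : r₁ = Q / 2 - c * (1 - t) / (2 * (1 + t)) := by
    rw [hr₁, e1, Real.sqrt_sq hA1]
  -- formula for r₂
  have hA2 : 0 ≤ Q / 2 + c * (1 - t) / (2 * (1 + t)) := by
    rw [div_add_div _ _ (two_ne_zero) (by positivity)]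
    apply div_nonneg _ (by positivity)
    nlinarith
  have e2 : ρ ^ 2 + (z - c₂) ^ 2 = (Q / 2 + c * (1 - t) / (2 * (1 + t))) ^ 2 := by
    rw [hρsq, hbQ, hz, hc]
    field_simp
    ring
  have hR2 : r₂ = Q / 2 + c * (1 - t) / (2 * (1 + t)) := by
    rw [hr₂, e2, Real.sqrt_sq hA2]
  refine ⟨hR1, hR2, ?_, ?_, ?_⟩
  · rw [hR1, hz, hc]; field_simp; ring
  · rw [hR2, hz, hc]; field_simp; ring
  · rw [hR1, hR2, hz, hc]; field_simp; ring
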